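/- Let d ≥ 1, n > max(2^d, d² + d), and k = n − d. If G ≤ S_n is a subgroup whose Galois closure over k equals the full symmetric group S_n, then G = A_n or G = S_n. -/

import Mathlib

/-- `σ ⊢ f`: the permutation `σ` leaves the function `f : ({1,…,k}^Ω) → {1,…,k}` invariant. -/
def InvariantUnder {Ω : Type*} (k : ℕ) (σ : Equiv.Perm Ω) (f : (Ω → Fin k) → Fin k) : Prop :=
  ∀ x : Ω → Fin k, f x = f (fun i => x (σ i))

/-- The Galois closure over `k` of a subgroup `G` of the symmetric group on `Ω`. -/
def galoisClosure {Ω : Type*} (k : ℕ) (G : Subgroup (Equiv.Perm Ω)) : Set (Equiv.Perm Ω) :=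
  {σ | ∀ f : (Ω → Fin k) → Fin k, (∀ π ∈ G, InvariantUnder k π f) → InvariantUnder k σ f}

/-- `G` is Galois closed over `k`. -/
def IsGaloisClosed {Ω : Type*} (k : ℕ) (G : Subgroup (Equiv.Perm Ω)) : Prop :=
  galoisClosure k G = (G : Set (Equiv.Perm Ω))

open Equiv Equiv.Perm


-- helper: find a point outside a finite list of points
lemma exists_ne_of_card {n : ℕ} (s : Finset (Fin n)) (h : s.card < n) :
    ∃ c : Fin n, c ∉ s := by
  by_contra hc
  push_neg at hc
  have : (Finset.univ : Finset (Fin n)) ⊆ s := fun x _ => hc x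
  have := Finset.card_le_card this
  simp [Finset.card_univ] at this
  omega

lemma three_cycle_mem_of_normal {n : ℕ} (h5 : 5 ≤ n) (N : Subgroup (Perm (Fin n)))
    (hnorm : N.Normal) (hbot : N ≠ ⊥) : ∃ τ ∈ N, IsThreeCycle τ := by
  obtain ⟨⟨g, hgN⟩, hg1⟩ := Subgroup.ne_bot_iff_exists_ne_one.mp hbot
  have hg : g ≠ 1 := by simpa [Subtype.ext_iff] using hg1
  obtain ⟨a, ha⟩ : ∃ a, g a ≠ a := by
    by_contra hc; push_neg at hc; exact hg (Equiv.ext hc)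
  set b := g a with hb
  obtain ⟨c, hc⟩ := exists_ne_of_card {a, b} (lt_of_le_of_lt (Finset.card_insert_le _ _) (by simp; omega))
  simp only [Finset.mem_insert, Finset.mem_singleton, not_or] at hc
  obtain ⟨hca, hcb⟩ := hc
  set y := g c with hy
  have hba : b ≠ a := ha
  have hyb : y ≠ b := fun h => hca (g.injective h)
  -- h = swap b y * swap a c ∈ N
  have hmem : swap b y * swap a c ∈ N := by
    have h1 : swap a c * g⁻¹ * (swap a c)⁻¹ ∈ N := hnorm.conj_mem _ (N.inv_mem hgN) _
    have h2 : g * (swap a c * g⁻¹ * (swap a c)⁻¹) ∈ N := N.mul_mem hgN h1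
    have : g * (swap a c * g⁻¹ * (swap a c)⁻¹) = swap b y * swap a c := by
      rw [hb, hy, swap_apply_apply]
      simp [mul_assoc]
    rwa [this] at h2
  by_cases hya : y = a
  · refine ⟨_, hmem, ?_⟩
    rw [hya, swap_comm b a]
    exact isThreeCycle_swap_mul_swap_same hba.symm (Ne.symm hca) (fun h => hcb h.symm)
  · by_cases hyc : y = c
    · refine ⟨_, hmem, ?_⟩
      rw [hyc, swap_comm b c, swap_comm a c]
      exact isThreeCycle_swap_mul_swap_same hcb hca hba
    · -- all of a, b, c, y distinct; pick a 5th point e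
      obtain ⟨e, he⟩ := exists_ne_of_card {a, b, c, y} (by
        apply lt_of_le_of_lt (Finset.card_insert_le _ _)
        apply Nat.lt_of_lt_of_le _ h5
        apply lt_of_le_of_lt (Nat.add_le_add_right (Finset.card_insert_le _ _) 1)
        apply lt_of_le_of_lt (Nat.add_le_add_right (Nat.add_le_add_right (Finset.card_insert_le _ _) 1) 1)
        simp)
      simp only [Finset.mem_insert, Finset.mem_singleton, not_or] at he
      obtain ⟨hea, heb, hec, hey⟩ := he
      have hmem2 : swap b e * swap a c ∈ N := by
        have h1 := hnorm.conj_mem _ hmem (swap y e)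
        have : swap y e * (swap b y * swap a c) * (swap y e)⁻¹ = swap b e * swap a c := by
          have k1 : swap y e * swap b y * (swap y e)⁻¹ = swap b e := by
            rw [← swap_apply_apply]
            rw [swap_apply_of_ne_of_ne (Ne.symm hyb) (Ne.symm heb), swap_apply_left]
          have k2 : swap y e * swap a c * (swap y e)⁻¹ = swap a c := by
            rw [← swap_apply_apply]
            rw [swap_apply_of_ne_of_ne (fun h => hya h.symm) (Ne.symm hea),
                swap_apply_of_ne_of_ne (fun h => hyc h.symm) (Ne.symm hec)]
          calc swap y e * (swap b y * swap a c) * (swap y e)⁻¹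
              = (swap y e * swap b y * (swap y e)⁻¹) * (swap y e * swap a c * (swap y e)⁻¹) := by
                group
            _ = swap b e * swap a c := by rw [k1, k2]
        rwa [this] at h1
      have hmem3 : (swap b y * swap a c) * (swap b e * swap a c)⁻¹ ∈ N :=
        N.mul_mem hmem (N.inv_mem hmem2)
      refine ⟨_, hmem3, ?_⟩
      have : (swap b y * swap a c) * (swap b e * swap a c)⁻¹ = swap b y * swap b e := by
        simp [mul_assoc, swap_inv]
      rw [this]
      exact isThreeCycle_swap_mul_swap_same (Ne.symm hyb) (Ne.symm heb) (fun h => hey h.symm)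

lemma alternating_le_of_normal {n : ℕ} (h5 : 5 ≤ n) (N : Subgroup (Perm (Fin n)))
    (hnorm : N.Normal) (hbot : N ≠ ⊥) : alternatingGroup (Fin n) ≤ N := by
  obtain ⟨τ, hτN, hτ⟩ := three_cycle_mem_of_normal h5 N hnorm hbot
  rw [← closure_three_cycles_eq_alternating]
  rw [Subgroup.closure_le]
  intro ρ hρ
  have : IsConj τ ρ := isConj_iff_cycleType_eq.mpr (by rw [hτ.cycleType, IsThreeCycle.cycleType hρ])
  obtain ⟨π, hπ⟩ := isConj_iff.mp this
  rw [← hπ]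
  exact hnorm.conj_mem _ hτN π


lemma alt_le_of_index_two {n : ℕ} (G : Subgroup (Perm (Fin n))) (h2 : G.index = 2) :
    alternatingGroup (Fin n) ≤ G := by
  rw [← closure_three_cycles_eq_alternating, Subgroup.closure_le]
  intro ρ hρ
  have h3 : ρ ^ 3 = 1 := by
    rw [← Equiv.Perm.IsThreeCycle.orderOf hρ]
    exact pow_orderOf_eq_one ρ
  have : (ρ ^ 2) ^ 2 = ρ := by
    rw [← pow_mul]
    calc ρ ^ 4 = ρ ^ 3 * ρ := by group
    _ = ρ := by rw [h3, one_mul]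
  rw [← this]
  exact Subgroup.sq_mem_of_index_two h2 _

lemma alt_le_of_index_lt {n : ℕ} (h5 : 5 ≤ n) (G : Subgroup (Perm (Fin n)))
    (hlt : G.index < n) : alternatingGroup (Fin n) ≤ G := by
  refine le_trans (alternating_le_of_normal h5 G.normalCore inferInstance ?_) G.normalCore_le
  intro hbot
  have hker : G.normalCore = (MulAction.toPermHom (Perm (Fin n)) (Perm (Fin n) ⧸ G)).ker :=
    Subgroup.normalCore_eq_ker G
  have hinj : Function.Injective (MulAction.toPermHom (Perm (Fin n)) (Perm (Fin n) ⧸ G)) := by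
    rw [← MonoidHom.ker_eq_bot_iff, ← hker, hbot]
  have hcard := Nat.card_le_card_of_injective _ hinj
  have hQ : Nat.card (Perm (Fin n) ⧸ G) = G.index := rfl
  have hfin : Nat.card (Perm (Perm (Fin n) ⧸ G)) = Nat.factorial G.index := by
    have : Fintype (Perm (Fin n) ⧸ G) := Fintype.ofFinite _
    classical
    rw [Nat.card_eq_fintype_card, Fintype.card_perm, ← hQ, Nat.card_eq_fintype_card]
  have hPn : Nat.card (Perm (Fin n)) = Nat.factorial n := by
    rw [Nat.card_eq_fintype_card, Fintype.card_perm, Fintype.card_fin]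
  rw [hPn, hfin] at hcard
  have hle2 : Nat.factorial n ≤ Nat.factorial (n-1) :=
    le_trans hcard (Nat.factorial_le (by omega))
  have h1 : Nat.factorial n = n * Nat.factorial (n-1) := by
    conv_lhs => rw [show n = (n-1)+1 by omega]
    rw [Nat.factorial_succ]
    congr 2
    omega
  rw [h1] at hle2
  nlinarith [Nat.factorial_pos (n-1)]

lemma eq_alt_or_top_of_alt_le {n : ℕ} (h3 : 3 ≤ n) (G : Subgroup (Perm (Fin n)))
    (hle : alternatingGroup (Fin n) ≤ G) : G = alternatingGroup (Fin n) ∨ G = ⊤ := by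
  have hnt : Nontrivial (Fin n) := Fin.nontrivial_iff_two_le.mpr (by omega)
  have hA2 : (alternatingGroup (Fin n)).index = 2 := by
    have hmul := Subgroup.index_mul_card (alternatingGroup (Fin n))
    have h2 := two_mul_card_alternatingGroup (α := Fin n)
    have hpos : 0 < Fintype.card (alternatingGroup (Fin n)) := Fintype.card_pos
    rw [Nat.card_eq_fintype_card, Nat.card_eq_fintype_card] at hmul
    refine Nat.eq_of_mul_eq_mul_right hpos ?_
    rw [hmul, ← h2]
  have hdvd : G.index ∣ 2 := hA2 ▸ Subgroup.index_dvd_of_le hle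
  rcases (Nat.dvd_prime Nat.prime_two).mp hdvd with h | h
  · exact Or.inr (Subgroup.index_eq_one.mp h)
  · left
    refine (Subgroup.eq_of_le_of_card_ge hle ?_).symm
    have hmulA := Subgroup.card_mul_index (alternatingGroup (Fin n))
    have hmulG := Subgroup.card_mul_index G
    rw [hA2] at hmulA; rw [h] at hmulG
    omega


open Classical in
lemma index_le_pow (d n k : ℕ) (hd : 1 ≤ d) (hn : max (2 ^ d) (d ^ 2 + d) < n) (hk : k = n - d)
    (G : Subgroup (Equiv.Perm (Fin n)))
    (hcl : galoisClosure k G = Set.univ) : G.index ≤ 2 ^ d := by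
  have hdd : d ≤ d ^ 2 := by nlinarith
  have hn2 : d ^ 2 + d < n := lt_of_le_of_lt (le_max_right _ _) hn
  have h2d : 2 * d < n := by omega
  have hdk : d < k := by omega
  have hk1 : 1 < k := by omega
  -- the base coloring with d doubled fibers
  set x0 : Fin n → Fin k := fun i =>
    if h : i.val < 2 * d then ⟨i.val / 2, by omega⟩ else ⟨i.val - d, by omega⟩ with hx0
  have hx0lt : ∀ i : Fin n, i.val < 2 * d → (x0 i).val = i.val / 2 := by
    intro i h; simp [hx0, dif_pos h]
  have hx0ge : ∀ i : Fin n, ¬ i.val < 2 * d → (x0 i).val = i.val - d := by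
    intro i h; simp [hx0, dif_neg h]
  -- the stabilizer subgroup
  set H : Subgroup (Equiv.Perm (Fin n)) :=
    { carrier := {σ | ∀ i, x0 (σ i) = x0 i}
      one_mem' := by intro i; rfl
      mul_mem' := by
        intro a b ha hb i
        simp only [Set.mem_setOf_eq] at ha hb ⊢
        rw [Equiv.Perm.mul_apply, ha, hb]
      inv_mem' := by
        intro a ha
        simp only [Set.mem_setOf_eq] at ha ⊢
        intro i
        have h := ha (a⁻¹ i)
        rw [show a (a⁻¹ i) = i from a.apply_symm_apply i] at h
        exact h.symm } with hH
  have hHmem : ∀ σ : Equiv.Perm (Fin n), σ ∈ H ↔ ∀ i, x0 (σ i) = x0 i := by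
    intro σ; rfl
  -- analysis of stabilizer elements
  have stab_low : ∀ σ ∈ H, ∀ i : Fin n, i.val < 2 * d →
      (σ i).val < 2 * d ∧ (σ i).val / 2 = i.val / 2 := by
    intro σ hσ i hi
    have h := congrArg Fin.val ((hHmem σ).mp hσ i)
    by_cases hs : (σ i).val < 2 * d
    · rw [hx0lt _ hs, hx0lt _ hi] at h
      exact ⟨hs, h⟩
    · rw [hx0ge _ hs, hx0lt _ hi] at h
      omega
  have stab_high : ∀ σ ∈ H, ∀ i : Fin n, 2 * d ≤ i.val → σ i = i := by
    intro σ hσ i hi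
    have h := congrArg Fin.val ((hHmem σ).mp hσ i)
    by_cases hs : (σ i).val < 2 * d
    · rw [hx0lt _ hs, hx0ge _ (by omega)] at h
      omega
    · rw [hx0ge _ hs, hx0ge _ (by omega)] at h
      exact Fin.ext (by omega)
  -- injection of H into Fin d → Fin 2
  have hcardH : Nat.card H ≤ 2 ^ d := by
    have hinj : Function.Injective (fun (σ : H) (c : Fin d) =>
        (⟨(σ.1 ⟨2 * c.val, by omega⟩).val % 2, by omega⟩ : Fin 2)) := by
      intro σ τ hfe
      ext i
      by_cases hi : i.val < 2 * d
      · have hc : i.val / 2 < d := by omega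
        set e : Fin n := ⟨2 * (i.val / 2), by omega⟩ with he
        have hev2 : e.val = 2 * (i.val / 2) := by rw [he]
        have hev : e.val < 2 * d := by omega
        have hA := stab_low σ.1 σ.2 e hev
        have hB := stab_low τ.1 τ.2 e hev
        have hmod : (σ.1 e).val % 2 = (τ.1 e).val % 2 := by
          have := congrFun hfe ⟨i.val / 2, hc⟩
          simpa [he] using congrArg Fin.val this
        have hAB : σ.1 e = τ.1 e := Fin.ext (by omega)
        by_cases hie : i.val = 2 * (i.val / 2)
        · have : i = e := Fin.ext (by omega)
          rw [this]; exact congrArg Fin.val hAB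
        · have hA' := stab_low σ.1 σ.2 i hi
          have hB' := stab_low τ.1 τ.2 i hi
          have hne : i ≠ e := fun h => hie (congrArg Fin.val h)
          have h1 : σ.1 i ≠ σ.1 e := fun h => hne (σ.1.injective h)
          have h2 : τ.1 i ≠ τ.1 e := fun h => hne (τ.1.injective h)
          have h1v : (σ.1 i).val ≠ (σ.1 e).val := fun h => h1 (Fin.ext h)
          have h2v : (τ.1 i).val ≠ (τ.1 e).val := fun h => h2 (Fin.ext h)
          have hABv : (σ.1 e).val = (τ.1 e).val := congrArg Fin.val hAB
          omega
      · rw [stab_high σ.1 σ.2 i (by omega), stab_high τ.1 τ.2 i (by omega)]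
    calc Nat.card H ≤ Nat.card (Fin d → Fin 2) := Nat.card_le_card_of_injective _ hinj
      _ = 2 ^ d := by simp [Nat.card_eq_fintype_card]
  -- the Galois argument: S_n = H * G
  have hdecomp : ∀ σ : Equiv.Perm (Fin n), ∃ h ∈ H, ∃ g ∈ G, σ = h * g := by
    intro σ
    have hmem : σ ∈ galoisClosure k G := by rw [hcl]; trivial
    set P : (Fin n → Fin k) → Prop := fun x => ∃ g ∈ G, ∀ i, x i = x0 (g i) with hP
    set f : (Fin n → Fin k) → Fin k := fun x => if P x then ⟨0, by omega⟩ else ⟨1, hk1⟩ with hf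
    have hGinv : ∀ π ∈ G, InvariantUnder k π f := by
      intro π hπ x
      have : P x ↔ P (fun i => x (π i)) := by
        constructor
        · rintro ⟨g, hg, hx⟩
          exact ⟨g * π, G.mul_mem hg hπ, fun i => by rw [Equiv.Perm.mul_apply]; exact hx (π i)⟩
        · rintro ⟨g, hg, hy⟩
          refine ⟨g * π⁻¹, G.mul_mem hg (G.inv_mem hπ), fun j => ?_⟩
          have := hy (π⁻¹ j)
          simpa [Equiv.Perm.mul_apply] using this
      simp only [hf]
      by_cases hx : P x
      · rw [if_pos hx, if_pos (this.mp hx)]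
      · rw [if_neg hx, if_neg (fun h => hx (this.mpr h))]
    have hinv := hmem f hGinv x0
    have hPx0 : P x0 := ⟨1, G.one_mem, by simp⟩
    have hP2 : P (fun i => x0 (σ i)) := by
      by_contra h'
      rw [hf] at hinv
      simp only at hinv
      rw [if_pos hPx0, if_neg h'] at hinv
      exact absurd (congrArg Fin.val hinv) (by simp)
    obtain ⟨g, hg, hx⟩ := hP2
    refine ⟨σ * g⁻¹, ?_, g, hg, by group⟩
    rw [hHmem]
    intro i
    have := hx (g⁻¹ i)
    simpa [Equiv.Perm.mul_apply] using this
  -- counting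
  have hsurj : Function.Surjective (fun p : H × G => (p.1.1 * p.2.1 : Equiv.Perm (Fin n))) := by
    intro σ
    obtain ⟨h, hh, g, hg, rfl⟩ := hdecomp σ
    exact ⟨(⟨h, hh⟩, ⟨g, hg⟩), rfl⟩
  have hcard := Nat.card_le_card_of_surjective _ hsurj
  rw [Nat.card_prod] at hcard
  have hGpos : 0 < Nat.card G := Nat.card_pos
  have hmul := Subgroup.index_mul_card G
  have : G.index * Nat.card G ≤ 2 ^ d * Nat.card G := by
    rw [hmul]
    calc Nat.card (Equiv.Perm (Fin n)) ≤ Nat.card H * Nat.card G := hcard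
      _ ≤ 2 ^ d * Nat.card G := Nat.mul_le_mul_right _ hcardH
  exact Nat.le_of_mul_le_mul_right this hGpos

/-- If `n > max(2^d, d² + d)`, `k = n - d`, and the Galois closure of `G ≤ S_n` over `k`
is all of `S_n`, then `G = A_n` or `G = S_n`. -/
theorem stmt_15 (d n k : ℕ) (hd : 1 ≤ d) (hn : max (2 ^ d) (d ^ 2 + d) < n) (hk : k = n - d)
    (G : Subgroup (Equiv.Perm (Fin n)))
    (hcl : galoisClosure k G = Set.univ) :
    G = alternatingGroup (Fin n) ∨ G = ⊤ := by
  have hidx : G.index ≤ 2 ^ d := index_le_pow d n k hd hn hk G hcl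
  have h2dn : 2 ^ d < n := lt_of_le_of_lt (le_max_left _ _) hn
  have hdd : d ≤ d ^ 2 := by nlinarith
  have hn2 : d ^ 2 + d < n := lt_of_le_of_lt (le_max_right _ _) hn
  have h3 : 3 ≤ n := by omega
  have hA : alternatingGroup (Fin n) ≤ G ∨ G = ⊤ := by
    by_cases h5 : 5 ≤ n
    · exact Or.inl (alt_le_of_index_lt h5 G (by omega))
    · have hd1 : d = 1 := by
        by_contra hne
        have h2 : 2 ≤ d := by omega
        have : 4 ≤ 2 ^ d := by
          calc (4 : ℕ) = 2 ^ 2 := rfl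
            _ ≤ 2 ^ d := Nat.pow_le_pow_right (by norm_num) h2
        omega
      have hidx2 : G.index ≤ 2 := by rw [hd1] at hidx; simpa using hidx
      have h0 : G.index ≠ 0 := Subgroup.index_ne_zero_of_finite
      interval_cases h : G.index
      · exact absurd rfl h0
      · exact Or.inr (Subgroup.index_eq_one.mp h)
      · exact Or.inl (alt_le_of_index_two G h)
  rcases hA with hA | hA
  · exact eq_alt_or_top_of_alt_le h3 G hA
  · exact Or.inr hA
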